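/- Let h: ℝ → ℝ be differentiable and strictly increasing, and F(w,s) a function with partial derivative F_s such that F_s(w,s)/(s-w) is nondecreasing in w (F-MON↑) and F_s > 0. If h is convex, then F̂(w,s) := F(h(w), h(s)) also satisfies F-MON↑, i.e. F̂_s(w,s)/(s-w) is nondecreasing in w for w < s. -/
import Mathlib


open Set

/-- If `h` is differentiable, strictly increasing and convex, and `F` satisfies
F-MON↑ (`F_s(w,s)/(s-w)` nondecreasing in `w`) with `F_s > 0`, then
`F̂(w,s) = F(h(w), h(s))` also satisfies F-MON↑. -/
theorem stmt_19 (F Fs : ℝ → ℝ → ℝ)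
    (hderiv : ∀ w s, HasDerivAt (F w) (Fs w s) s)
    (hmon : ∀ s : ℝ, ∀ w w', w ≤ w' → w' < s →
      Fs w s / (s - w) ≤ Fs w' s / (s - w'))
    (hFspos : ∀ w s, 0 < Fs w s)
    (h : ℝ → ℝ) (hdiff : Differentiable ℝ h) (hsm : StrictMono h)
    (hconv : ConvexOn ℝ univ h) :
    ∀ s : ℝ, ∀ w w', w ≤ w' → w' < s →
      deriv (fun t => F (h w) (h t)) s / (s - w)
        ≤ deriv (fun t => F (h w') (h t)) s / (s - w') := by
  intro s w w' hww' hw's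
  have hws : w < s := lt_of_le_of_lt hww' hw's
  -- compute the derivatives by the chain rule
  have hd : ∀ v : ℝ, deriv (fun t => F (h v) (h t)) s = Fs (h v) (h s) * deriv h s := by
    intro v
    have := ((hderiv (h v) (h s)).comp s (hdiff s).hasDerivAt)
    exact this.deriv
  rw [hd w, hd w']
  have hderivnn : 0 ≤ deriv h s := by
    have hslope : Filter.Tendsto (slope h s) (nhdsWithin s {s}ᶜ) (nhds (deriv h s)) :=
      hasDerivAt_iff_tendsto_slope.mp (hdiff s).hasDerivAt
    refine ge_of_tendsto hslope ?_
    filter_upwards [self_mem_nhdsWithin] with y hy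
    rcases lt_or_gt_of_ne (Ne.symm hy) with hlt | hgt
    · rw [slope_def_field]
      apply div_nonneg <;> linarith [hsm.monotone hlt.le, hsm hlt]
    · rw [slope_def_field]
      have := hsm hgt
      have : h y ≤ h s := (hsm.monotone hgt.le)
      rw [div_nonneg_iff]; right
      constructor <;> linarith
  rw [mul_comm (Fs (h w) (h s)), mul_comm (Fs (h w') (h s)), mul_div_assoc, mul_div_assoc]
  apply mul_le_mul_of_nonneg_left _ hderivnn
  -- key inequality
  have h1 : h w ≤ h w' := hsm.monotone hww'
  have h2 : h w' < h s := hsm hw's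
  have h12 : h w < h s := lt_of_le_of_lt h1 h2
  have key1 : Fs (h w) (h s) / (h s - h w) ≤ Fs (h w') (h s) / (h s - h w') :=
    hmon (h s) (h w) (h w') h1 h2
  have key2 : (h s - h w) / (s - w) ≤ (h s - h w') / (s - w') := by
    have := hconv.slope_mono (mem_univ s)
      (⟨mem_univ w, (ne_of_lt hws)⟩ : w ∈ univ \ {s})
      (⟨mem_univ w', (ne_of_lt hw's)⟩ : w' ∈ univ \ {s}) hww'
    have e1 : slope h s w = (h s - h w) / (s - w) := by
      rw [slope_def_field]; rw [div_eq_div_iff (by linarith) (by linarith)]; ring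
    have e2 : slope h s w' = (h s - h w') / (s - w') := by
      rw [slope_def_field]; rw [div_eq_div_iff (by linarith) (by linarith)]; ring
    rwa [e1, e2] at this
  have eq1 : Fs (h w) (h s) / (s - w)
      = (Fs (h w) (h s) / (h s - h w)) * ((h s - h w) / (s - w)) := by
    rw [div_mul_div_comm, mul_comm (Fs (h w) (h s)), mul_div_mul_left _ _ (sub_ne_zero.mpr h12.ne')]
  have eq2 : Fs (h w') (h s) / (s - w')
      = (Fs (h w') (h s) / (h s - h w')) * ((h s - h w') / (s - w')) := by
    rw [div_mul_div_comm, mul_comm (Fs (h w') (h s)), mul_div_mul_left _ _ (sub_ne_zero.mpr h2.ne')]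
  rw [eq1, eq2]
  apply mul_le_mul key1 key2
  · apply div_nonneg <;> linarith
  · exact le_of_lt (div_pos (hFspos _ _) (by linarith))
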